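/- arXiv:1405.0303 — 3 statements merged into one kernel-verified Lean document; each statement's English description precedes it below -/
import Mathlib

section
/- A linear map T from R^X to R^X (with X finite) given by a matrix with column sums equal to 1 has all entries nonnegative (i.e. is a stochastic matrix) if and only if it is a contraction in the L1 norm: for every vector v, ‖T v‖₁ ≤ ‖v‖₁, where ‖v‖₁ = Σ_x |v(x)|. -/
/-- A linear map on `ℝ^X` given by a matrix with column sums equal to `1` has all entries
nonnegative (i.e. is a stochastic matrix) if and only if it is an `L¹`-contraction. -/
theorem stochastic_iff_l1_contraction {X : Type*} [Fintype X]
    (T : Matrix X X ℝ) (hsum : ∀ x1, ∑ x2, T x2 x1 = 1) :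
    (∀ x2 x1, 0 ≤ T x2 x1) ↔
      ∀ v : X → ℝ, ∑ x2, |∑ x1, T x2 x1 * v x1| ≤ ∑ x, |v x| := by
  classical
  constructor
  · intro hpos v
    calc ∑ x2, |∑ x1, T x2 x1 * v x1|
        ≤ ∑ x2, ∑ x1, T x2 x1 * |v x1| := by
          refine Finset.sum_le_sum fun x2 _ => ?_
          refine (Finset.abs_sum_le_sum_abs _ _).trans ?_
          refine Finset.sum_le_sum fun x1 _ => ?_
          rw [abs_mul, abs_of_nonneg (hpos x2 x1)]
      _ = ∑ x1, (∑ x2, T x2 x1) * |v x1| := by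
          rw [Finset.sum_comm]
          simp [Finset.sum_mul]
      _ = ∑ x, |v x| := by simp [hsum]
  · intro h x2 x1
    have hv := h (fun y => if y = x1 then 1 else 0)
    simp only [mul_ite, mul_one, mul_zero, Finset.sum_ite_eq',
      Finset.mem_univ, if_true] at hv
    have h1 : (∑ x, |if x = x1 then (1:ℝ) else 0|) = 1 := by
      simp [apply_ite abs]
    rw [h1] at hv
    have heq : ∑ x2, |T x2 x1| = ∑ x2, T x2 x1 := by
      have := hsum x1
      have hle : ∑ x2, T x2 x1 ≤ ∑ x2, |T x2 x1| :=
        Finset.sum_le_sum fun i _ => le_abs_self _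
      linarith
    have := (Finset.sum_eq_sum_iff_of_le (fun i _ => le_abs_self (T i x1))).mp heq.symm x2
      (Finset.mem_univ _)
    have habs : |T x2 x1| = T x2 x1 := this.symm
    exact abs_nonneg _ |>.trans habs.le
end

section
/- For the qubit pure dephasing dynamics with coherence factor R(t) ∈ (0,1), the quantum relative entropy between evolved states of ρ₁ = ½[[1,1],[1,1]] and ρ₂ = ½[[1,−1],[−1,1]] equals R(t)·log[(1+R(t))/(1−R(t))]. -/
open Matrix
open scoped ComplexOrder

/-- The functional-calculus logarithm of a Hermitian matrix, restricted to its support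
(eigenvalue `0` is sent to `0` since `Real.log 0 = 0`); junk value `0` off Hermitian. -/
noncomputable def matLog {n : Type*} [Fintype n] [DecidableEq n]
    (A : Matrix n n ℂ) : Matrix n n ℂ :=
  if h : A.IsHermitian then
    (h.eigenvectorUnitary : Matrix n n ℂ) *
      Matrix.diagonal (fun i => (Real.log (h.eigenvalues i) : ℂ)) *
      (star h.eigenvectorUnitary : Matrix n n ℂ)
  else 0

/-- The quantum relative entropy `S(ρ‖σ) = Tr(ρ log ρ) − Tr(ρ log σ)`. -/
noncomputable def relEntropy {n : Type*} [Fintype n] [DecidableEq n]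
    (ρ σ : Matrix n n ℂ) : ℝ :=
  ((ρ * matLog ρ).trace).re - ((ρ * matLog σ).trace).re

theorem det_sub_eig {n : Type*} [Fintype n] [DecidableEq n] {A : Matrix n n ℂ} (hA : A.IsHermitian) (i : n) :
    (((hA.eigenvalues i : ℂ)) • (1 : Matrix n n ℂ) - A).det = 0 := by
  have h := hA.eigenvalues_mem_spectrum_real i
  rw [spectrum.mem_iff] at h
  have e : algebraMap ℝ (Matrix n n ℂ) (hA.eigenvalues i) - A
      = ((hA.eigenvalues i : ℂ)) • (1 : Matrix n n ℂ) - A := by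
    ext j k
    simp [Algebra.algebraMap_eq_smul_one, Matrix.one_apply]
  by_contra hd
  exact h (e ▸ (Matrix.isUnit_iff_isUnit_det _).mpr (isUnit_iff_ne_zero.mpr hd))

theorem matLog_linear {n : Type*} [Fintype n] [DecidableEq n] {A : Matrix n n ℂ}
    (hA : A.IsHermitian) (c₀ c₁ : ℝ)
    (h : ∀ i, Real.log (hA.eigenvalues i) = c₀ + c₁ * hA.eigenvalues i) :
    matLog A = (c₀ : ℂ) • (1 : Matrix n n ℂ) + (c₁ : ℂ) • A := by
  rw [matLog, dif_pos hA]
  have hd : Matrix.diagonal (fun i => (Real.log (hA.eigenvalues i) : ℂ))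
      = (c₀ : ℂ) • (1 : Matrix n n ℂ)
        + (c₁ : ℂ) • Matrix.diagonal (RCLike.ofReal ∘ hA.eigenvalues) := by
    ext i j
    by_cases hij : i = j
    · subst hij
      simp only [Matrix.add_apply, Matrix.smul_apply, Matrix.diagonal_apply_eq,
        Matrix.one_apply_eq, Function.comp_apply, smul_eq_mul, mul_one, h i]
      push_cast
      rfl
    · simp [Matrix.diagonal_apply_ne _ hij, Matrix.one_apply, hij]
  rw [hd, mul_add, add_mul, Matrix.mul_smul, Matrix.smul_mul, mul_one,
    (Matrix.mem_unitaryGroup_iff).mp (hA.eigenvectorUnitary).2,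
    Matrix.mul_smul, Matrix.smul_mul]
  conv_rhs => rw [hA.spectral_theorem]
  rfl

theorem eig_vals (R : ℝ) {A : Matrix (Fin 2) (Fin 2) ℂ}
    (hAdef : A = !![(1/2 : ℂ), (R : ℂ)/2; (R : ℂ)/2, 1/2] ∨
              A = !![(1/2 : ℂ), -((R : ℂ)/2); -((R : ℂ)/2), 1/2])
    (hA : A.IsHermitian) (i : Fin 2) :
    hA.eigenvalues i = (1 + R)/2 ∨ hA.eigenvalues i = (1 - R)/2 := by
  have hdet := det_sub_eig hA i
  set lam := hA.eigenvalues i with hlam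
  have hq : ((lam : ℂ) - (1 + R)/2) * ((lam : ℂ) - (1 - R)/2) = 0 := by
    rcases hAdef with h | h <;> subst h <;>
    · rw [Matrix.det_fin_two] at hdet
      simp only [Matrix.sub_apply, Matrix.smul_apply, Matrix.one_apply,
        Matrix.of_apply, Matrix.cons_val', Matrix.cons_val_zero, Matrix.cons_val_one,
        Matrix.head_cons, Matrix.head_fin_const, Matrix.empty_val',
        Matrix.cons_val_fin_one, smul_eq_mul] at hdet
      norm_num at hdet
      linear_combination hdet
  rcases mul_eq_zero.mp hq with h | h
  · left
    have : (lam : ℂ) = ((1 + R)/2 : ℝ) := by push_cast; linear_combination h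
    exact_mod_cast this
  · right
    have : (lam : ℂ) = ((1 - R)/2 : ℝ) := by push_cast; linear_combination h
    exact_mod_cast this

/-- For qubit pure dephasing with coherence factor `R ∈ (0,1)`, the quantum relative
entropy between the evolved states of `ρ₁ = ½[[1,1],[1,1]]` and `ρ₂ = ½[[1,−1],[−1,1]]`
equals `R·log[(1+R)/(1−R)]`. -/
theorem dephasing_relative_entropy (R : ℝ) (hR0 : 0 < R) (hR1 : R < 1) :
    relEntropy !![(1/2 : ℂ), (R : ℂ)/2; (R : ℂ)/2, 1/2]
        !![(1/2 : ℂ), -((R : ℂ)/2); -((R : ℂ)/2), 1/2]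
      = R * Real.log ((1 + R) / (1 - R)) := by
  set A : Matrix (Fin 2) (Fin 2) ℂ := !![(1/2 : ℂ), (R : ℂ)/2; (R : ℂ)/2, 1/2] with hAdef
  set B : Matrix (Fin 2) (Fin 2) ℂ := !![(1/2 : ℂ), -((R : ℂ)/2); -((R : ℂ)/2), 1/2] with hBdef
  have hA : A.IsHermitian := by
    ext i j
    fin_cases i <;> fin_cases j <;>
      simp [hAdef, Matrix.conjTranspose_apply, Complex.conj_ofReal]
  have hB : B.IsHermitian := by
    ext i j
    fin_cases i <;> fin_cases j <;>
      simp [hBdef, Matrix.conjTranspose_apply, Complex.conj_ofReal]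
  set c₁ : ℝ := (Real.log ((1 + R)/2) - Real.log ((1 - R)/2)) / R with hc₁
  set c₀ : ℝ := Real.log ((1 + R)/2) - c₁ * ((1 + R)/2) with hc₀
  have key : ∀ lam : ℝ, lam = (1 + R)/2 ∨ lam = (1 - R)/2 →
      Real.log lam = c₀ + c₁ * lam := by
    rintro lam (rfl | rfl)
    · rw [hc₀]; ring
    · rw [hc₀, hc₁]
      field_simp
      ring
  have hLA : matLog A = (c₀ : ℂ) • (1 : Matrix (Fin 2) (Fin 2) ℂ) + (c₁ : ℂ) • A :=
    matLog_linear hA c₀ c₁ (fun i => key _ (eig_vals R (Or.inl hAdef) hA i))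
  have hLB : matLog B = (c₀ : ℂ) • (1 : Matrix (Fin 2) (Fin 2) ℂ) + (c₁ : ℂ) • B :=
    matLog_linear hB c₀ c₁ (fun i => key _ (eig_vals R (Or.inr hBdef) hB i))
  have hc₁R : c₁ * R = Real.log ((1 + R) / (1 - R)) := by
    rw [hc₁, div_mul_cancel₀ _ hR0.ne',
      ← Real.log_div (by linarith : (0:ℝ) < (1 + R)/2).ne' (by linarith : (0:ℝ) < (1 - R)/2).ne']
    congr 1
    field_simp
  rw [relEntropy, hLA, hLB]
  simp only [Matrix.mul_add, Matrix.mul_smul, Matrix.mul_one, Matrix.trace_add,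
    Matrix.trace_smul, hAdef, hBdef]
  rw [show (!![(1/2 : ℂ), (R : ℂ)/2; (R : ℂ)/2, 1/2] * !![(1/2 : ℂ), (R : ℂ)/2; (R : ℂ)/2, 1/2])
      = !![(1/4 + (R:ℂ)^2/4), (R:ℂ)/2; (R:ℂ)/2, (1/4 + (R:ℂ)^2/4)] from by
    ext i j; fin_cases i <;> fin_cases j <;> (simp [Matrix.mul_apply, Fin.sum_univ_two]; ring)]
  rw [show (!![(1/2 : ℂ), (R : ℂ)/2; (R : ℂ)/2, 1/2] * !![(1/2 : ℂ), -((R : ℂ)/2); -((R : ℂ)/2), 1/2])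
      = !![(1/4 - (R:ℂ)^2/4), 0; 0, (1/4 - (R:ℂ)^2/4)] from by
    ext i j; fin_cases i <;> fin_cases j <;> (simp [Matrix.mul_apply, Fin.sum_univ_two]; ring)]
  simp only [Matrix.trace_fin_two_of, smul_eq_mul]
  have e1 : ((c₀:ℂ) * ((1:ℂ)/2 + 1/2) + (c₁:ℂ) * ((1:ℂ)/4 + (R:ℂ)^2/4 + ((1:ℂ)/4 + (R:ℂ)^2/4)))
      = ((c₀ + c₁ * (1/2 + R^2/2) : ℝ) : ℂ) := by push_cast; ring
  have e2 : ((c₀:ℂ) * ((1:ℂ)/2 + 1/2) + (c₁:ℂ) * ((1:ℂ)/4 - (R:ℂ)^2/4 + ((1:ℂ)/4 - (R:ℂ)^2/4)))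
      = ((c₀ + c₁ * (1/2 - R^2/2) : ℝ) : ℂ) := by push_cast; ring
  rw [e1, e2, Complex.ofReal_re, Complex.ofReal_re, ← hc₁R]
  ring
end

section
/- There exists a stochastic process on two states and three times that is divisible but not Markovian: defining joint probabilities P(x3;x2;x1) = ¼(δ_{x3,0}δ_{x2,0}δ_{x1,1} + δ_{x3,0}δ_{x2,1}δ_{x1,0} + δ_{x3,1}δ_{x2,0}δ_{x1,0} + δ_{x3,1}δ_{x2,1}δ_{x1,1}), all two-point transition matrices equal ½ (hence satisfy the divisibility conditions), yet P(1,t3|0,t2;0,t1) = 1 ≠ 0 = P(1,t3|0,t2;1,t1), so the Markov condition fails. -/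
/-- Kronecker delta on `Fin 2`, valued in `ℝ`. -/
def kd (a b : Fin 2) : ℝ := if a = b then 1 else 0

/-- The joint probability `P(x3,t3; x2,t2; x1,t1)` of the example. -/
noncomputable def J (x3 x2 x1 : Fin 2) : ℝ :=
  (1 / 4) * (kd x3 0 * kd x2 0 * kd x1 1 + kd x3 0 * kd x2 1 * kd x1 0 +
    kd x3 1 * kd x2 0 * kd x1 0 + kd x3 1 * kd x2 1 * kd x1 1)

/-- Transition matrix `T(x3,t3|x2,t2)`. -/
noncomputable def T32 (x' x : Fin 2) : ℝ := (∑ y, J x' x y) / (∑ p, ∑ y, J p x y)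

/-- Transition matrix `T(x2,t2|x1,t1)`. -/
noncomputable def T21 (x' x : Fin 2) : ℝ := (∑ p, J p x' x) / (∑ p, ∑ q, J p q x)

/-- Transition matrix `T(x3,t3|x1,t1)`. -/
noncomputable def T31 (x' x : Fin 2) : ℝ := (∑ y, J x' y x) / (∑ p, ∑ q, J p q x)


lemma T32_eq (x' x : Fin 2) : T32 x' x = 1 / 2 := by
  fin_cases x' <;> fin_cases x <;>
    norm_num [T32, J, kd, Fin.sum_univ_two]

lemma T21_eq (x' x : Fin 2) : T21 x' x = 1 / 2 := by
  fin_cases x' <;> fin_cases x <;>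
    norm_num [T21, J, kd, Fin.sum_univ_two]

lemma T31_eq (x' x : Fin 2) : T31 x' x = 1 / 2 := by
  fin_cases x' <;> fin_cases x <;>
    norm_num [T31, J, kd, Fin.sum_univ_two]

/-- A divisible but non-Markovian process on two states and three times: all two-point
transition matrices equal `1/2` (hence are nonnegative, column-stochastic and satisfy the
composition law), yet `P(1,t3|0,t2;0,t1) = 1 ≠ 0 = P(1,t3|0,t2;1,t1)`, so the Markov
condition fails. -/
theorem divisible_not_markov :
    (∀ x' x : Fin 2, T32 x' x = 1 / 2) ∧
    (∀ x' x : Fin 2, T21 x' x = 1 / 2) ∧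
    (∀ x' x : Fin 2, T31 x' x = 1 / 2) ∧
    -- divisibility conditions
    (∀ x' x : Fin 2, 0 ≤ T32 x' x ∧ 0 ≤ T21 x' x ∧ 0 ≤ T31 x' x) ∧
    (∀ x : Fin 2, (∑ x', T32 x' x) = 1 ∧ (∑ x', T21 x' x) = 1 ∧ (∑ x', T31 x' x) = 1) ∧
    (∀ x3 x1 : Fin 2, T31 x3 x1 = ∑ x2, T32 x3 x2 * T21 x2 x1) ∧
    -- the Markov condition fails
    J 1 0 0 / (∑ p, J p 0 0) = 1 ∧ J 1 0 1 / (∑ p, J p 0 1) = 0 ∧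
    (1 : ℝ) ≠ 0 := by
  refine ⟨T32_eq, T21_eq, T31_eq, ?_, ?_, ?_, ?_, ?_, one_ne_zero⟩
  · intro x' x; rw [T32_eq, T21_eq, T31_eq]; norm_num
  · intro x; rw [Fin.sum_univ_two, Fin.sum_univ_two, Fin.sum_univ_two,
      T32_eq, T32_eq, T21_eq, T21_eq, T31_eq, T31_eq]; norm_num
  · intro x3 x1
    rw [Fin.sum_univ_two, T31_eq, T32_eq, T32_eq, T21_eq, T21_eq]; norm_num
  · norm_num [J, kd, Fin.sum_univ_two]
  · simp [J, kd, Fin.sum_univ_two]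
end
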